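/- In the Cayley graph of BS(1, 2) = ⟨a, t | tat⁻¹ = a²⟩ with generating set {a, t}, for every r ≥ 1 and every H ∈ ℤ, if d(t^H, a^M t^x) ≤ r for some x ∈ ℤ and M ∈ ℤ, then |M| ≤ 2^{r − 1 + H}. -/

import Mathlib

/-- The relator `t a t⁻¹ a⁻²` of the Baumslag–Solitar group BS(1,2), with
`a = of false` and `t = of true`. -/
def bsRels : Set (FreeGroup Bool) :=
  { FreeGroup.of true * FreeGroup.of false * (FreeGroup.of true)⁻¹ *
      (FreeGroup.of false * FreeGroup.of false)⁻¹ }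

/-- The Baumslag–Solitar group BS(1,2) = ⟨a, t | t a t⁻¹ = a²⟩. -/
abbrev BS12 : Type := PresentedGroup bsRels

/-- The generator `a` of BS(1,2). -/
def aBS : BS12 := PresentedGroup.of false

/-- The generator `t` of BS(1,2). -/
def tBS : BS12 := PresentedGroup.of true

/-- The word metric on a group with respect to a generating set `S`: the length of a
shortest word in `S ∪ S⁻¹` taking `g` to `h`. -/
noncomputable def wordDist {G : Type*} [Group G] (S : Set G) (g h : G) : ℕ :=
  sInf {n | ∃ w : List G, w.length = n ∧ (∀ x ∈ w, x ∈ S ∨ x⁻¹ ∈ S) ∧ g * w.prod = h}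

/-- The affine map `y ↦ y + 1` as a permutation of `ℝ`. -/
noncomputable def aPerm : Equiv.Perm ℝ := Equiv.addRight 1

/-- The map `y ↦ 2 * y` as a permutation of `ℝ`. -/
noncomputable def tPerm : Equiv.Perm ℝ := Equiv.mulLeft₀ 2 two_ne_zero

lemma aPerm_apply (y : ℝ) : aPerm y = y + 1 := rfl
lemma tPerm_apply (y : ℝ) : tPerm y = 2 * y := rfl
lemma aPerm_inv_apply (y : ℝ) : aPerm⁻¹ y = y - 1 := rfl
lemma tPerm_inv_apply (y : ℝ) : tPerm⁻¹ y = 2⁻¹ * y := rfl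

lemma bs_rel_holds : tPerm * aPerm * tPerm⁻¹ = aPerm * aPerm := by
  ext y
  simp only [Equiv.Perm.mul_apply, aPerm_apply, tPerm_apply, tPerm_inv_apply]
  ring

noncomputable def bsF : Bool → Equiv.Perm ℝ := fun b => match b with
  | true => tPerm
  | false => aPerm

lemma bsF_true : bsF true = tPerm := rfl
lemma bsF_false : bsF false = aPerm := rfl

lemma bsF_rels : ∀ r ∈ bsRels, FreeGroup.lift bsF r = 1 := by
  intro r hr
  rw [bsRels, Set.mem_singleton_iff] at hr
  subst hr
  simp only [map_mul, map_inv, FreeGroup.lift_apply_of, bsF_true, bsF_false]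
  rw [mul_inv_eq_one, ← bs_rel_holds]

/-- The homomorphism BS(1,2) → Perm ℝ sending a to y+1 and t to 2y. -/
noncomputable def phi : BS12 →* Equiv.Perm ℝ := PresentedGroup.toGroup bsF_rels

lemma phi_a : phi aBS = aPerm := PresentedGroup.toGroup.of bsF_rels
lemma phi_t : phi tBS = tPerm := PresentedGroup.toGroup.of bsF_rels

lemma tPerm_zpow (k : ℤ) : ∀ y : ℝ, (tPerm ^ k) y = 2 ^ k * y := by
  induction k using Int.induction_on with
  | zero => simp
  | succ n ih =>
      intro y
      rw [zpow_add_one, Equiv.Perm.mul_apply, tPerm_apply, ih, zpow_add_one₀ two_ne_zero]; ring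
  | pred n ih =>
      intro y
      rw [zpow_sub_one, Equiv.Perm.mul_apply, tPerm_inv_apply, ih, zpow_sub_one₀ two_ne_zero, mul_assoc]

lemma aPerm_zpow (k : ℤ) : ∀ y : ℝ, (aPerm ^ k) y = y + k := by
  induction k using Int.induction_on with
  | zero => simp
  | succ n ih =>
      intro y
      rw [zpow_add_one, Equiv.Perm.mul_apply, aPerm_apply, ih]; push_cast; ring
  | pred n ih =>
      intro y
      rw [zpow_sub_one, Equiv.Perm.mul_apply, aPerm_inv_apply, ih]; push_cast; ring

/-- Bound function: `c 0 = 0`, `c (n+1) = 2^n`. -/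
def cBound : ℕ → ℝ
  | 0 => 0
  | n + 1 => 2 ^ n

lemma cBound_nonneg (n : ℕ) : 0 ≤ cBound n := by
  cases n with
  | zero => simp [cBound]
  | succ n => simp only [cBound]; positivity

lemma cBound_succ_ge_add (n : ℕ) : cBound n + 1 ≤ cBound (n + 1) := by
  cases n with
  | zero => simp [cBound]
  | succ n =>
      simp only [cBound]
      have : (1:ℝ) ≤ 2 ^ n := one_le_pow₀ one_le_two
      calc (2:ℝ)^n + 1 ≤ 2^n + 2^n := by linarith
        _ = 2 ^ (n+1) := by ring

lemma cBound_succ_ge_two_mul (n : ℕ) : 2 * cBound n ≤ cBound (n + 1) := by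
  cases n with
  | zero => norm_num [cBound]
  | succ n => simp only [cBound]; rw [pow_succ]; linarith [cBound_nonneg (n+1)]

lemma cBound_mono_succ (n : ℕ) : cBound n ≤ cBound (n + 1) := by
  linarith [cBound_succ_ge_add n]

lemma key (w : List BS12)
    (hw : ∀ g ∈ w, g ∈ ({aBS, tBS} : Set BS12) ∨ g⁻¹ ∈ ({aBS, tBS} : Set BS12)) :
    |(phi w.prod) 0| ≤ cBound w.length := by
  induction w with
  | nil => simp [cBound]
  | cons g w ih =>
      have hy := ih (fun g hg => hw g (List.mem_cons_of_mem _ hg))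
      set y := (phi w.prod) 0 with hydef
      have hg := hw g List.mem_cons_self
      have hstep : (phi (g :: w).prod) 0 = phi g y := by
        rw [List.prod_cons, map_mul, Equiv.Perm.mul_apply]
      rw [List.length_cons, hstep]
      rcases hg with (hg | hg) | (hg | hg)
      · -- g = aBS
        rw [hg, phi_a, aPerm_apply]
        calc |y + 1| ≤ |y| + 1 := by
              calc |y + 1| ≤ |y| + |(1:ℝ)| := abs_add_le _ _
                _ = |y| + 1 := by norm_num
          _ ≤ cBound w.length + 1 := by linarith
          _ ≤ _ := cBound_succ_ge_add _
      · -- g = tBS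
        rw [Set.mem_singleton_iff] at hg
        rw [hg, phi_t, tPerm_apply, abs_mul]
        calc |(2:ℝ)| * |y| = 2 * |y| := by rw [abs_two]
          _ ≤ 2 * cBound w.length := by linarith [abs_nonneg y]
          _ ≤ _ := cBound_succ_ge_two_mul _
      · -- g⁻¹ = aBS
        have : g = aBS⁻¹ := by rw [← hg, inv_inv]
        rw [this, map_inv, phi_a, aPerm_inv_apply]
        calc |y - 1| ≤ |y| + 1 := by
              calc |y - 1| ≤ |y| + |(-1:ℝ)| := by rw [sub_eq_add_neg]; exact abs_add_le _ _
                _ = |y| + 1 := by norm_num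
          _ ≤ cBound w.length + 1 := by linarith
          _ ≤ _ := cBound_succ_ge_add _
      · -- g⁻¹ = tBS
        rw [Set.mem_singleton_iff] at hg
        have : g = tBS⁻¹ := by rw [← hg, inv_inv]
        rw [this, map_inv, phi_t, tPerm_inv_apply, abs_mul]
        have h1 : |(2:ℝ)⁻¹| * |y| ≤ |y| := by
          rw [abs_inv, abs_two]
          nlinarith [abs_nonneg y]
        calc |(2:ℝ)⁻¹| * |y| ≤ |y| := h1
          _ ≤ cBound w.length := hy
          _ ≤ _ := cBound_mono_succ _

lemma word_for_zpow {G : Type*} [Group G] (g : G) (k : ℤ) :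
    ∃ w : List G, w.prod = g ^ k ∧ ∀ x ∈ w, x = g ∨ x = g⁻¹ := by
  refine ⟨List.replicate k.natAbs (if 0 ≤ k then g else g⁻¹), ?_, ?_⟩
  · rw [List.prod_replicate]
    rcases le_or_gt 0 k with hk | hk
    · rw [if_pos hk, ← zpow_natCast, Int.natAbs_of_nonneg hk]
    · rw [if_neg (not_le.mpr hk), inv_pow, ← zpow_natCast, ← zpow_neg,
        Int.ofNat_natAbs_of_nonpos (le_of_lt hk), neg_neg]
  · intro x hx
    rw [List.mem_replicate] at hx
    rcases hx with ⟨-, hx⟩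
    split at hx
    · exact Or.inl hx
    · exact Or.inr hx

theorem bs12_horizontal_distance_bound
    (r : ℕ) (hr : 1 ≤ r) (H M x : ℤ)
    (h : wordDist {aBS, tBS} (tBS ^ H) (aBS ^ M * tBS ^ x) ≤ r) :
    (|M| : ℝ) ≤ (2:ℝ) ^ ((r:ℤ) - 1 + H) := by
  -- the defining set is nonempty
  obtain ⟨w1, hw1, hmem1⟩ := word_for_zpow tBS (-H)
  obtain ⟨w2, hw2, hmem2⟩ := word_for_zpow aBS M
  obtain ⟨w3, hw3, hmem3⟩ := word_for_zpow tBS x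
  have hne : {n | ∃ w : List BS12, w.length = n ∧
      (∀ g ∈ w, g ∈ ({aBS, tBS} : Set BS12) ∨ g⁻¹ ∈ ({aBS, tBS} : Set BS12)) ∧
      tBS ^ H * w.prod = aBS ^ M * tBS ^ x}.Nonempty := by
    refine ⟨(w1 ++ w2 ++ w3).length, w1 ++ w2 ++ w3, rfl, ?_, ?_⟩
    · intro g hg
      simp only [List.mem_append] at hg
      have gen : g = aBS ∨ g = aBS⁻¹ ∨ g = tBS ∨ g = tBS⁻¹ := by
        rcases hg with (hg | hg) | hg
        · rcases hmem1 g hg with h' | h' <;> tauto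
        · rcases hmem2 g hg with h' | h' <;> tauto
        · rcases hmem3 g hg with h' | h' <;> tauto
      rcases gen with h' | h' | h' | h' <;> subst h' <;> simp
    · rw [List.prod_append, List.prod_append, hw1, hw2, hw3, ← mul_assoc, ← mul_assoc,
        ← zpow_add, add_neg_cancel, zpow_zero, one_mul]
  have hinf := Nat.sInf_mem hne
  rw [wordDist] at h
  obtain ⟨w, hwlen, hwmem, hweq⟩ := hinf
  have hlen : w.length ≤ r := hwlen.trans_le h
  -- apply phi, evaluate at 0
  have heval : (2:ℝ) ^ H * (phi w.prod) 0 = M := by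
    have := congrArg (fun g => (phi g) 0) hweq
    simp only [map_mul, Equiv.Perm.mul_apply, map_zpow] at this
    rw [phi_a, phi_t] at this
    rw [tPerm_zpow, aPerm_zpow, tPerm_zpow] at this
    rw [mul_zero, zero_add] at this
    exact this
  have hkey := key w hwmem
  have habs : |(M:ℝ)| = (2:ℝ) ^ H * |(phi w.prod) 0| := by
    rw [← heval, abs_mul, abs_of_pos (zpow_pos two_pos H)]
  have hc : cBound w.length ≤ (2:ℝ) ^ ((r:ℤ) - 1) := by
    cases hn : w.length with
    | zero => simpa [cBound] using le_of_lt (zpow_pos (by norm_num : (0:ℝ) < 2) _)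
    | succ n =>
        simp only [cBound]
        rw [← zpow_natCast]
        apply zpow_le_zpow_right₀ one_le_two
        rw [hn] at hlen
        omega
  calc |(M:ℝ)| ≤ (2:ℝ) ^ H * (2:ℝ) ^ ((r:ℤ) - 1) := by
        rw [habs]
        exact mul_le_mul_of_nonneg_left (hkey.trans hc) (le_of_lt (zpow_pos two_pos H))
    _ = (2:ℝ) ^ ((r:ℤ) - 1 + H) := by rw [← zpow_add₀ (two_ne_zero), add_comm]
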